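/- In the MV single-point game with p ≥ 0 correct players and w ≥ 1 incorrect players, the Shapley value of every incorrect player equals SV^-_{p,w} = ( p/(p+w) − 1/C − p · SV^+_{p,w} ) / w (where the term p · SV^+_{p,w} is interpreted as 0 when p = 0). -/

import Mathlib

open Finset

/-- Shapley value of player `j` in the cooperative game `v` on the finite player set `I`. -/
noncomputable def shapley {α : Type*} [DecidableEq α] (I : Finset α) (v : Finset α → ℝ)
    (j : α) : ℝ :=
  (1 / (I.card : ℝ)) * ∑ S ∈ (I.erase j).powerset,
    (v (insert j S) - v S) / ((I.card - 1).choose S.card : ℝ)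

/-- Marginal utility `ψ(a,b)` of a correct LF joining a coalition with `a` correct and `b`
incorrect LFs, with `C` classes. -/
noncomputable def psi (C a b : ℕ) : ℝ :=
  if a + b = 0 then 1 - 1 / (C : ℝ)
  else ((a : ℝ) + 1) / ((a : ℝ) + (b : ℝ) + 1) - (a : ℝ) / ((a : ℝ) + (b : ℝ))

/-- `SV⁺_{p,w}` (equals `0` when `p = 0` since the outer sum is empty). -/
noncomputable def SVpos (C p w : ℕ) : ℝ :=
  (1 / ((p : ℝ) + (w : ℝ))) * ∑ i ∈ Finset.range p, ∑ j ∈ Finset.range (w + 1),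
    psi C i j * ((p - 1).choose i : ℝ) * (w.choose j : ℝ) / ((p + w - 1).choose (i + j) : ℝ)

/-- `SV⁻_{p,w}`. -/
noncomputable def SVneg (C p w : ℕ) : ℝ :=
  ((p : ℝ) / ((p : ℝ) + (w : ℝ)) - 1 / (C : ℝ) - (p : ℝ) * SVpos C p w) / (w : ℝ)

/-- The MV single-point game: `P` the correct players, `W` the incorrect players,
utility `|S ∩ P|/|S| − 1/C` for nonempty `S`, and `0` on the empty coalition. -/
noncomputable def mvGame {α : Type*} [DecidableEq α] (C : ℕ) (P W : Finset α)
    (S : Finset α) : ℝ :=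
  if S = ∅ then 0 else ((S ∩ P).card : ℝ) / (S.card : ℝ) - 1 / (C : ℝ)

/-- In the MV single-point game with `p ≥ 0` correct players and `w ≥ 1` incorrect players,
the Shapley value of every incorrect player equals
`SV⁻_{p,w} = (p/(p+w) − 1/C − p·SV⁺_{p,w}) / w` (note `SVpos C 0 w = 0` by definition,
so `p·SV⁺_{p,w}` is `0` when `p = 0`). -/
lemma L1 (n j : ℕ) : (n : ℝ) * ((n - 1).choose j : ℝ) = ((n : ℝ) - j) * (n.choose j : ℝ) := by
  rcases Nat.eq_zero_or_pos n with hn | hn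
  · subst hn
    rcases Nat.eq_zero_or_pos j with hj | hj
    · simp [hj]
    · simp [Nat.choose_eq_zero_of_lt hj]
  rcases le_or_gt j n with hj | hj
  · have h := Nat.choose_mul_succ_eq (n - 1) j
    rw [Nat.sub_add_cancel hn] at h
    have h2 : (((n - 1).choose j * n : ℕ) : ℝ) = ((n.choose j * (n - j) : ℕ) : ℝ) := by
      rw [h]
    push_cast [Nat.cast_sub hj] at h2
    linarith
  · rw [Nat.choose_eq_zero_of_lt hj, Nat.choose_eq_zero_of_lt (by omega : n - 1 < j)]
    simp

lemma V1 (p w s : ℕ) : ∑ i ∈ range (s + 1), p.choose i * w.choose (s - i) = (p + w).choose s := by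
  rw [Nat.add_choose_eq, Finset.Nat.sum_antidiagonal_eq_sum_range_succ_mk]

lemma V2 (p w s : ℕ) (hs : 1 ≤ s) :
    ∑ i ∈ range (s + 1), i * (p.choose i * w.choose (s - i)) = p * (p + w - 1).choose (s - 1) := by
  rw [Finset.sum_range_succ']
  simp only [Nat.zero_eq, zero_mul, add_zero]
  cases p with
  | zero => simp
  | succ q =>
    have key : ∀ k, (k + 1) * ((q + 1).choose (k + 1) * w.choose (s - (k + 1)))
        = (q + 1) * (q.choose k * w.choose (s - 1 - k)) := by
      intro k
      have h := (Nat.add_one_mul_choose_eq q k).symm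
      rw [show s - (k + 1) = s - 1 - k from by omega,
        show (k + 1) * ((q + 1).choose (k + 1) * w.choose (s - 1 - k))
          = ((q + 1).choose (k + 1) * (k + 1)) * w.choose (s - 1 - k) from by ring,
        show (q+1).choose (k+1) * (k+1) = q.succ.choose k.succ * k.succ from rfl, h]
      ring
    rw [Finset.sum_congr rfl fun k _ => key k, ← Finset.mul_sum,
      show q + 1 + w - 1 = q + w from by omega, ← V1 q w (s - 1), Nat.sub_add_cancel hs]

lemma N1 (p w s : ℕ) (hw : 1 ≤ p + w) (hs : 1 ≤ s) :
    (((p:ℝ) + w) - s) * ((p + w - 1).choose (s - 1) : ℝ)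
      = (s : ℝ) * ((p + w - 1).choose s : ℝ) := by
  rcases le_or_gt s (p + w) with h | h
  · have key := Nat.choose_succ_right_eq (p + w - 1) (s - 1)
    rw [Nat.sub_add_cancel hs] at key
    have h2 : ((((p+w-1).choose s * s : ℕ)) : ℝ)
        = (((p+w-1).choose (s-1) * (p + w - 1 - (s - 1)) : ℕ) : ℝ) := by rw [key]
    have h3 : p + w - 1 - (s - 1) = p + w - s := by omega
    rw [h3] at h2
    push_cast [Nat.cast_sub h] at h2
    linarith
  · rw [Nat.choose_eq_zero_of_lt (by omega : p + w - 1 < s),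
      Nat.choose_eq_zero_of_lt (by omega : p + w - 1 < s - 1)]
    simp

lemma N2 (p w s : ℕ) (hw : 1 ≤ p + w) (hs : 1 ≤ s) :
    ((p + w).choose s : ℝ) = ((p + w - 1).choose s : ℝ) + ((p + w - 1).choose (s - 1) : ℝ) := by
  have h : (p + w).choose s = (p + w - 1).choose (s - 1) + (p + w - 1).choose s := by
    conv_lhs => rw [show p + w = (p + w - 1) + 1 from by omega, show s = (s - 1) + 1 from by omega]
    rw [Nat.choose_succ_succ, show (s - 1).succ = s from by omega]
  rw [h]
  push_cast
  ring

lemma L3 (p w s : ℕ) (hw : 1 ≤ p + w) (hs : 1 ≤ s) :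
    ∑ i ∈ range (s + 1),
      (((w:ℝ) - ((s - i : ℕ):ℝ)) * ((i:ℝ)/((s:ℝ)+1) - (i:ℝ)/(s:ℝ))
        + ((p:ℝ) - (i:ℝ)) * (((i:ℝ)+1)/((s:ℝ)+1) - (i:ℝ)/(s:ℝ)))
        * (p.choose i : ℝ) * (w.choose (s-i) : ℝ) / ((p+w-1).choose s : ℝ) = 0 := by
  have hs0 : (s:ℝ) ≠ 0 := by
    have : (0:ℝ) < s := by exact_mod_cast hs
    linarith
  have hs1 : (s:ℝ) + 1 ≠ 0 := by positivity
  set D := ((p+w-1).choose s : ℝ) with hD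
  set c1 : ℝ := ((p:ℝ) + w - s - 1)/(((s:ℝ)+1)*D) - ((p:ℝ) + w - s)/((s:ℝ)*D) with hc1
  set c2 : ℝ := (p:ℝ)/(((s:ℝ)+1)*D) with hc2
  have step1 : ∀ i ∈ range (s + 1),
      (((w:ℝ) - ((s - i : ℕ):ℝ)) * ((i:ℝ)/((s:ℝ)+1) - (i:ℝ)/(s:ℝ))
        + ((p:ℝ) - (i:ℝ)) * (((i:ℝ)+1)/((s:ℝ)+1) - (i:ℝ)/(s:ℝ)))
        * (p.choose i : ℝ) * (w.choose (s-i) : ℝ) / D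
      = c1 * ((i * (p.choose i * w.choose (s-i)) : ℕ) : ℝ)
        + c2 * (((p.choose i * w.choose (s-i)) : ℕ) : ℝ) := by
    intro i hi
    have hi' : i ≤ s := by simpa [Nat.lt_succ_iff] using hi
    rw [Nat.cast_sub hi', hc1, hc2]
    push_cast
    rcases eq_or_ne D 0 with hD0 | hD0
    · rw [hD0]; simp
    · field_simp
      ring
  rw [Finset.sum_congr rfl step1, Finset.sum_add_distrib, ← Finset.mul_sum, ← Finset.mul_sum]
  have hT1 : (∑ i ∈ range (s+1), ((i * (p.choose i * w.choose (s-i)) : ℕ) : ℝ))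
      = (p:ℝ) * ((p + w - 1).choose (s-1) : ℝ) := by
    rw [← Nat.cast_sum]
    rw [V2 p w s hs]
    push_cast; ring
  have hT0 : (∑ i ∈ range (s+1), (((p.choose i * w.choose (s-i)) : ℕ) : ℝ))
      = ((p + w).choose s : ℝ) := by
    rw [← Nat.cast_sum, V1]
  rw [hT1, hT0, N2 p w s hw hs]
  set Cm : ℝ := ((p + w - 1).choose (s - 1) : ℝ) with hCm
  have hN1 : (((p:ℝ) + w) - s) * Cm = (s : ℝ) * D := N1 p w s hw hs
  rcases eq_or_ne D 0 with hD0 | hD0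
  · rw [hc1, hc2, hD0]; simp
  · rw [hc1, hc2]
    field_simp
    linear_combination (-(p:ℝ)) * hN1

lemma L4 (p w : ℕ) (g : ℕ → ℕ → ℝ) (hg : ∀ i j, p < i ∨ w < j → g i j = 0) :
    ∑ i ∈ range (p + 1), ∑ j ∈ range (w + 1), g i j
      = ∑ s ∈ range (p + w + 1), ∑ i ∈ range (s + 1), g i (s - i) := by
  classical
  have hL : ∑ i ∈ range (p + 1), ∑ j ∈ range (w + 1), g i j
      = ∑ q ∈ (range (p+1) ×ˢ range (w+1)), g q.1 q.2 := by
    rw [Finset.sum_product]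
  set T : Finset (ℕ × ℕ) :=
    (range (p + w + 1) ×ˢ range (p + w + 1)).filter (fun q => q.1 + q.2 ≤ p + w) with hT
  have hsub : (range (p+1) ×ˢ range (w+1)) ⊆ T := by
    intro q hq
    simp only [Finset.mem_product, Finset.mem_range] at hq
    simp only [hT, Finset.mem_filter, Finset.mem_product, Finset.mem_range]
    omega
  have hL2 : ∑ q ∈ (range (p+1) ×ˢ range (w+1)), g q.1 q.2 = ∑ q ∈ T, g q.1 q.2 := by
    refine Finset.sum_subset hsub ?_
    intro q hqT hq
    simp only [Finset.mem_product, Finset.mem_range] at hq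
    exact hg q.1 q.2 (by omega)
  have hR : ∑ s ∈ range (p + w + 1), ∑ i ∈ range (s + 1), g i (s - i)
      = ∑ x ∈ (range (p + w + 1)).sigma (fun s => range (s + 1)), g x.2 (x.1 - x.2) := by
    rw [Finset.sum_sigma]
  rw [hL, hL2, hR]
  refine Finset.sum_bij' (fun q _ => (⟨q.1 + q.2, q.1⟩ : Σ _ : ℕ, ℕ))
    (fun x _ => (x.2, x.1 - x.2)) ?_ ?_ ?_ ?_ ?_
  · intro q hq
    simp only [hT, Finset.mem_filter, Finset.mem_product, Finset.mem_range] at hq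
    simp only [Finset.mem_sigma, Finset.mem_range]
    omega
  · intro x hx
    simp only [Finset.mem_sigma, Finset.mem_range] at hx
    simp only [hT, Finset.mem_filter, Finset.mem_product, Finset.mem_range]
    omega
  · intro q hq
    simp only [hT, Finset.mem_filter, Finset.mem_product, Finset.mem_range] at hq
    simp only [Nat.add_sub_cancel_left]
  · intro x hx
    simp only [Finset.mem_sigma, Finset.mem_range] at hx
    ext <;> simp <;> omega
  · intro q hq
    simp only [Nat.add_sub_cancel_left]

lemma L5 {α : Type*} [DecidableEq α] {A B : Finset α} (h : Disjoint A B) (f : ℕ → ℕ → ℝ) :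
    ∑ S ∈ (A ∪ B).powerset, f (S ∩ A).card (S ∩ B).card
      = ∑ i ∈ range (A.card + 1), ∑ j ∈ range (B.card + 1),
          (A.card.choose i : ℝ) * (B.card.choose j : ℝ) * f i j := by
  classical
  have step1 : ∑ S ∈ (A ∪ B).powerset, f (S ∩ A).card (S ∩ B).card
      = ∑ q ∈ A.powerset ×ˢ B.powerset, f q.1.card q.2.card := by
    refine Finset.sum_bij' (fun S _ => (S ∩ A, S ∩ B)) (fun q _ => q.1 ∪ q.2) ?_ ?_ ?_ ?_ ?_
    · intro S hS
      simp only [Finset.mem_product, Finset.mem_powerset]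
      exact ⟨Finset.inter_subset_right, Finset.inter_subset_right⟩
    · intro q hq
      simp only [Finset.mem_product, Finset.mem_powerset] at hq
      exact Finset.mem_powerset.mpr (Finset.union_subset_union hq.1 hq.2)
    · intro S hS
      rw [Finset.mem_powerset] at hS
      show (S ∩ A) ∪ (S ∩ B) = S
      rw [← Finset.inter_union_distrib_left, Finset.inter_eq_left.mpr hS]
    · intro q hq
      simp only [Finset.mem_product, Finset.mem_powerset] at hq
      have h1 : (q.1 ∪ q.2) ∩ A = q.1 := by
        ext x
        simp only [Finset.mem_inter, Finset.mem_union]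
        constructor
        · rintro ⟨hx | hx, hA⟩
          · exact hx
          · exact absurd hA (Finset.disjoint_right.mp h (hq.2 hx))
        · intro hx
          exact ⟨Or.inl hx, hq.1 hx⟩
      have h2 : (q.1 ∪ q.2) ∩ B = q.2 := by
        ext x
        simp only [Finset.mem_inter, Finset.mem_union]
        constructor
        · rintro ⟨hx | hx, hB⟩
          · exact absurd hB (Finset.disjoint_left.mp h (hq.1 hx))
          · exact hx
        · intro hx
          exact ⟨Or.inr hx, hq.2 hx⟩
      show ((q.1 ∪ q.2) ∩ A, (q.1 ∪ q.2) ∩ B) = q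
      rw [h1, h2]
    · intro S hS
      rfl
  rw [step1, Finset.sum_product]
  calc ∑ T ∈ A.powerset, ∑ U ∈ B.powerset, f T.card U.card
      = ∑ T ∈ A.powerset, ∑ j ∈ range (B.card + 1), (B.card.choose j : ℝ) * f T.card j := by
        refine Finset.sum_congr rfl fun T _ => ?_
        rw [Finset.sum_powerset_apply_card (fun j => f T.card j)]
        exact Finset.sum_congr rfl fun j _ => by rw [nsmul_eq_mul]
    _ = ∑ j ∈ range (B.card + 1), (B.card.choose j : ℝ) * ∑ T ∈ A.powerset, f T.card j := by
        rw [Finset.sum_comm]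
        exact Finset.sum_congr rfl fun j _ => by rw [Finset.mul_sum]
    _ = ∑ j ∈ range (B.card + 1), (B.card.choose j : ℝ) *
          ∑ i ∈ range (A.card + 1), (A.card.choose i : ℝ) * f i j := by
        refine Finset.sum_congr rfl fun j _ => ?_
        rw [Finset.sum_powerset_apply_card (fun i => f i j)]
        congr 1
        exact Finset.sum_congr rfl fun i _ => by rw [nsmul_eq_mul]
    _ = ∑ i ∈ range (A.card + 1), ∑ j ∈ range (B.card + 1),
          (A.card.choose i : ℝ) * (B.card.choose j : ℝ) * f i j := by
        rw [Finset.sum_comm]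
        exact Finset.sum_congr rfl fun i _ => by rw [Finset.mul_sum]; exact Finset.sum_congr rfl fun j _ => by ring

set_option maxHeartbeats 1000000 in
theorem stmt_6 {α : Type*} [DecidableEq α] (C : ℕ) (hC : 2 ≤ C)
    (P W : Finset α) (hPW : Disjoint P W) (hw : 1 ≤ W.card)
    (lam : α) (hlam : lam ∈ W) :
    shapley (P ∪ W) (mvGame C P W) lam = SVneg C P.card W.card := by
  classical
  set p := P.card with hp
  set w := W.card with hwdef
  -- basic facts
  have hlamP : lam ∉ P := fun h => (Finset.disjoint_left.mp hPW h) hlam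
  have hIcard : (P ∪ W).card = p + w := Finset.card_union_of_disjoint hPW
  have herase : (P ∪ W).erase lam = P ∪ (W.erase lam) := by
    rw [Finset.erase_union_distrib, Finset.erase_eq_of_notMem hlamP]
  have hW'card : (W.erase lam).card = w - 1 := Finset.card_erase_of_mem hlam
  have hdisj' : Disjoint P (W.erase lam) := hPW.mono_right (Finset.erase_subset _ _)
  -- the numerator function
  set F0 : ℕ → ℕ → ℝ := fun i j =>
    ((i:ℝ)/((i:ℝ)+(j:ℝ)+1) - 1/(C:ℝ))
      - (if i + j = 0 then 0 else (i:ℝ)/((i:ℝ)+(j:ℝ)) - 1/(C:ℝ)) with hF0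
  set F : ℕ → ℕ → ℝ := fun i j => F0 i j / ((p + w - 1).choose (i + j) : ℝ) with hF
  -- step 1 : the Shapley value as a double sum
  have hterm : ∀ S ∈ (P ∪ (W.erase lam)).powerset,
      (mvGame C P W (insert lam S) - mvGame C P W S) / ((p + w - 1).choose S.card : ℝ)
        = F (S ∩ P).card (S ∩ (W.erase lam)).card := by
    intro S hS
    rw [Finset.mem_powerset] at hS
    have hlamS : lam ∉ S := by
      intro hmem
      rcases Finset.mem_union.mp (hS hmem) with h | h
      · exact hlamP h
      · exact (Finset.notMem_erase lam W) h
    have hSsplit : S = (S ∩ P) ∪ (S ∩ (W.erase lam)) := by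
      rw [← Finset.inter_union_distrib_left, Finset.inter_eq_left.mpr hS]
    have hScard : S.card = (S ∩ P).card + (S ∩ (W.erase lam)).card := by
      conv_lhs => rw [hSsplit]
      exact Finset.card_union_of_disjoint
        (hdisj'.mono Finset.inter_subset_right Finset.inter_subset_right)
    have hinsP : (insert lam S) ∩ P = S ∩ P := Finset.insert_inter_of_notMem hlamP
    have hinsCard : (insert lam S).card = S.card + 1 := Finset.card_insert_of_notMem hlamS
    set i := (S ∩ P).card
    set j := (S ∩ (W.erase lam)).card
    have hmv1 : mvGame C P W (insert lam S) = ((i:ℝ))/((i:ℝ)+(j:ℝ)+1) - 1/(C:ℝ) := by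
      rw [mvGame, if_neg (Finset.insert_ne_empty lam S), hinsP, hinsCard, hScard]
      push_cast
      ring_nf
      rfl
    have hmv2 : mvGame C P W S
        = if i + j = 0 then 0 else (i:ℝ)/((i:ℝ)+(j:ℝ)) - 1/(C:ℝ) := by
      rcases eq_or_ne S ∅ with h0 | h0
      · have : i + j = 0 := by rw [← hScard, h0]; simp
        rw [mvGame, if_pos h0, if_pos this]
      · have : i + j ≠ 0 := by
          rw [← hScard]
          simpa [Finset.card_eq_zero] using h0
        rw [mvGame, if_neg h0, if_neg this, hScard]
        push_cast
        ring_nf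
        rfl
    rw [hF, hmv1, hmv2, hScard, hF0]
  have hshap : shapley (P ∪ W) (mvGame C P W) lam
      = (1/((p:ℝ)+(w:ℝ))) * ∑ i ∈ range (p + 1), ∑ j ∈ range w,
          (p.choose i : ℝ) * ((w-1).choose j : ℝ) * F i j := by
    rw [shapley, hIcard, herase, Finset.sum_congr rfl hterm, L5 hdisj' F, hW'card,
      Nat.sub_add_cancel hw]
    push_cast
    ring
  -- the two double sums
  set X : ℝ := ∑ i ∈ range (p + 1), ∑ j ∈ range w,
      (p.choose i : ℝ) * ((w-1).choose j : ℝ) * F i j with hX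
  set Y : ℝ := ∑ i ∈ range p, ∑ j ∈ range (w + 1),
      psi C i j * ((p - 1).choose i : ℝ) * (w.choose j : ℝ)
        / ((p + w - 1).choose (i + j) : ℝ) with hY
  set G : ℕ → ℕ → ℝ := fun i j =>
    (((w:ℝ) - (j:ℝ)) * F0 i j + ((p:ℝ) - (i:ℝ)) * psi C i j)
      * (p.choose i : ℝ) * (w.choose j : ℝ) / ((p + w - 1).choose (i + j) : ℝ) with hG
  set g : ℕ → ℕ → ℝ := fun i j => if i + j = 0 then 0 else G i j with hg
  clear_value F0 F X Y G g
  have key1 : (w:ℝ) * X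
      = ∑ i ∈ range (p + 1), ∑ j ∈ range (w + 1),
          ((w:ℝ) - (j:ℝ)) * F0 i j * (p.choose i : ℝ) * (w.choose j : ℝ)
            / ((p + w - 1).choose (i + j) : ℝ) := by
    rw [hX, Finset.mul_sum]
    refine Finset.sum_congr rfl fun i _ => ?_
    rw [Finset.mul_sum, Finset.sum_range_succ]
    have hzero : ((w:ℝ) - (w:ℝ)) * F0 i w * (p.choose i : ℝ) * (w.choose w : ℝ)
        / ((p + w - 1).choose (i + w) : ℝ) = 0 := by
      rw [sub_self]
      ring
    rw [hzero, add_zero]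
    refine Finset.sum_congr rfl fun j _ => ?_
    simp only [hF]
    rw [div_eq_mul_inv (F0 i j)]
    linear_combination ((p.choose i : ℝ) * F0 i j
      * (((p + w - 1).choose (i + j) : ℝ))⁻¹) * L1 w j
  have key2 : (p:ℝ) * Y
      = ∑ i ∈ range (p + 1), ∑ j ∈ range (w + 1),
          ((p:ℝ) - (i:ℝ)) * psi C i j * (p.choose i : ℝ) * (w.choose j : ℝ)
            / ((p + w - 1).choose (i + j) : ℝ) := by
    rw [hY, Finset.mul_sum, Finset.sum_range_succ]
    have hzero : ∑ j ∈ range (w + 1), ((p:ℝ) - (p:ℝ)) * psi C p j * (p.choose p : ℝ)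
        * (w.choose j : ℝ) / ((p + w - 1).choose (p + j) : ℝ) = 0 := by
      refine Finset.sum_eq_zero fun j _ => ?_
      rw [sub_self]
      ring
    rw [hzero, add_zero]
    refine Finset.sum_congr rfl fun i _ => ?_
    rw [Finset.mul_sum]
    refine Finset.sum_congr rfl fun j _ => ?_
    rw [div_eq_mul_inv, div_eq_mul_inv]
    linear_combination (psi C i j * (w.choose j : ℝ)
      * (((p + w - 1).choose (i + j) : ℝ))⁻¹) * L1 p i
  have key3 : (w:ℝ) * X + (p:ℝ) * Y
      = ∑ i ∈ range (p + 1), ∑ j ∈ range (w + 1), G i j := by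
    rw [key1, key2, ← Finset.sum_add_distrib]
    refine Finset.sum_congr rfl fun i _ => ?_
    rw [← Finset.sum_add_distrib]
    refine Finset.sum_congr rfl fun j _ => ?_
    simp only [hG]
    ring
  have hvanish : ∀ i j, p < i ∨ w < j → g i j = 0 := by
    intro i j hij
    rcases eq_or_ne (i + j) 0 with h0 | h0
    · exact absurd hij (by omega)
    · rcases hij with h | h
      · simp [hg, hG, h0, Nat.choose_eq_zero_of_lt h]
      · simp [hg, hG, h0, Nat.choose_eq_zero_of_lt h]
  have key5 : ∑ i ∈ range (p + 1), ∑ j ∈ range (w + 1), g i j = 0 := by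
    rw [L4 p w g hvanish]
    refine Finset.sum_eq_zero fun s hs => ?_
    rcases Nat.eq_zero_or_pos s with h0 | h1
    · subst h0
      simp [hg]
    · have hL3 := L3 p w s (by omega) h1
      rw [← hL3]
      refine Finset.sum_congr rfl fun i hi => ?_
      have hi' : i ≤ s := by simpa [Nat.lt_succ_iff] using hi
      have hij : i + (s - i) = s := by omega
      simp only [hg, hG, hF0, psi]
      rw [hij, if_neg (by omega : ¬ s = 0), if_neg (by omega : ¬ s = 0),
        if_neg (by omega : ¬ s = 0), Nat.cast_sub hi']
      have hcast : (i:ℝ) + ((s:ℝ) - (i:ℝ)) = (s:ℝ) := by ring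
      rw [hcast]
      ring
  have hG00 : G 0 0 = (p:ℝ) - ((p:ℝ) + (w:ℝ))/(C:ℝ) := by
    simp only [hG, hF0, psi]
    norm_num
    ring
  have key4 : ∑ i ∈ range (p + 1), ∑ j ∈ range (w + 1), G i j
      = G 0 0 + ∑ i ∈ range (p + 1), ∑ j ∈ range (w + 1), g i j := by
    have hsplit : ∀ i ∈ range (p + 1), ∀ j ∈ range (w + 1),
        G i j = (if i = 0 ∧ j = 0 then G 0 0 else 0) + g i j := by
      intro i _ j _
      by_cases h0 : i + j = 0
      · have hi0 : i = 0 := by omega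
        have hj0 : j = 0 := by omega
        subst hi0; subst hj0
        simp [hg]
      · have hne : ¬ (i = 0 ∧ j = 0) := by omega
        rw [if_neg hne, zero_add, hg]
        simp only [if_neg h0]
    have hind : ∑ i ∈ range (p + 1), ∑ j ∈ range (w + 1),
        (if i = 0 ∧ j = 0 then G 0 0 else 0) = G 0 0 := by
      rw [Finset.sum_eq_single 0]
      · rw [Finset.sum_eq_single 0]
        · simp
        · intro j _ hj
          simp [hj]
        · intro h
          exact absurd (Finset.mem_range.mpr (by omega)) h
      · intro i _ hi
        refine Finset.sum_eq_zero fun j _ => ?_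
        simp [hi]
      · intro h
        exact absurd (Finset.mem_range.mpr (by omega)) h
    calc ∑ i ∈ range (p + 1), ∑ j ∈ range (w + 1), G i j
        = ∑ i ∈ range (p + 1), ∑ j ∈ range (w + 1),
            ((if i = 0 ∧ j = 0 then G 0 0 else 0) + g i j) :=
          Finset.sum_congr rfl fun i hi => Finset.sum_congr rfl fun j hj => hsplit i hi j hj
      _ = (∑ i ∈ range (p + 1), ∑ j ∈ range (w + 1), (if i = 0 ∧ j = 0 then G 0 0 else 0))
            + ∑ i ∈ range (p + 1), ∑ j ∈ range (w + 1), g i j := by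
          simp only [Finset.sum_add_distrib]
      _ = G 0 0 + ∑ i ∈ range (p + 1), ∑ j ∈ range (w + 1), g i j := by rw [hind]
  have key : (w:ℝ) * X + (p:ℝ) * Y = (p:ℝ) - ((p:ℝ) + (w:ℝ))/(C:ℝ) := by
    rw [key3, key4, key5, hG00, add_zero]
  -- finish
  rw [hshap]
  simp only [SVneg, SVpos]
  rw [← hY]
  have hwpos : (0:ℝ) < w := by exact_mod_cast hw
  have hppos : (0:ℝ) ≤ p := Nat.cast_nonneg p
  have hpw : ((p:ℝ) + (w:ℝ)) ≠ 0 := by linarith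
  have hw0 : (w:ℝ) ≠ 0 := by linarith
  have hC0 : (C:ℝ) ≠ 0 := by
    have : (0:ℝ) < C := by exact_mod_cast (by omega : 0 < C)
    linarith
  have key' : (C:ℝ) * ((w:ℝ) * X + (p:ℝ) * Y) = (C:ℝ) * (p:ℝ) - ((p:ℝ) + (w:ℝ)) := by
    rw [key]
    field_simp
  field_simp
  linear_combination key'
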